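/- arXiv:2507.13532 — 4 statements merged into one kernel-verified Lean document; each statement's English description precedes it below -/
import Mathlib

section
/- Let 1/2 ≤ p ≤ 1, let d ≥ 2 be an integer, and set a = (d^(2p−1) − 1)/(d − 1). Then for every integer k with 1 ≤ k ≤ d, one has k + k(k−1)·a ≤ k^(2p). -/
theorem stmt_4 (p : ℝ) (hp1 : 1/2 ≤ p) (hp2 : p ≤ 1) (d k : ℕ)
    (hd : 2 ≤ d) (hk1 : 1 ≤ k) (hkd : k ≤ d) :
    (k : ℝ) + (k : ℝ) * ((k : ℝ) - 1) * (((d : ℝ) ^ (2*p - 1) - 1) / ((d : ℝ) - 1))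
      ≤ (k : ℝ) ^ (2*p) := by
  have hd1 : (1:ℝ) < (d:ℝ) := by exact_mod_cast lt_of_lt_of_le one_lt_two hd
  have hk0 : (1:ℝ) ≤ (k:ℝ) := by exact_mod_cast hk1
  have hkd' : (k:ℝ) ≤ (d:ℝ) := by exact_mod_cast hkd
  set s := 2*p - 1 with hs
  have hs0 : 0 ≤ s := by simp only [hs]; linarith
  have hs1 : s ≤ 1 := by simp only [hs]; linarith
  set t := ((k:ℝ)-1)/((d:ℝ)-1) with ht
  have hdne : (d:ℝ) - 1 ≠ 0 := by linarith
  have ht0 : 0 ≤ t := div_nonneg (by linarith) (by linarith)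
  have ht1 : t ≤ 1 := by rw [ht, div_le_one (by linarith)]; linarith
  have htd : t * ((d:ℝ) - 1) = (k:ℝ) - 1 := div_mul_cancel₀ _ hdne
  have key : (1:ℝ) + t * ((d:ℝ)^s - 1) ≤ (k:ℝ)^s := by
    have hcc := Real.concaveOn_rpow hs0 hs1
    have hcomb := hcc.2 (Set.mem_Ici.mpr (by norm_num : (0:ℝ) ≤ 1))
      (Set.mem_Ici.mpr (by positivity : (0:ℝ) ≤ (d:ℝ)))
      (by linarith : (0:ℝ) ≤ 1 - t) ht0 (by ring)
    have hx : (1-t) * (1:ℝ) + t * (d:ℝ) = (k:ℝ) := by nlinarith [htd]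
    simp only [smul_eq_mul, hx, Real.one_rpow] at hcomb
    nlinarith [hcomb]
  have hq : ((k:ℝ)-1) * (((d:ℝ)^s - 1) / ((d:ℝ)-1)) = t * ((d:ℝ)^s - 1) := by
    rw [ht]; field_simp
  have hr : (k:ℝ) ^ (2*p) = (k:ℝ) * (k:ℝ)^s := by
    rw [show 2*p = 1 + s by rw [hs]; ring, Real.rpow_add (by linarith) , Real.rpow_one]
  rw [hr, mul_assoc, hq]
  nlinarith [key, mul_le_mul_of_nonneg_left key (by linarith : (0:ℝ) ≤ (k:ℝ))]
end

section
/- Let d ≥ 2 and 1/2 ≤ p < 1, and set a = (d^(2p−1) − 1)/(d − 1). Then 0 ≤ a < 1, and hence there exist d unit vectors e_1, …, e_d in ℝ^d with ⟨e_i, e_j⟩ = a for all i ≠ j; moreover for such vectors ‖e_1 + ⋯ + e_d‖ = d^p. -/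
open scoped RealInnerProductSpace
open Finset

lemma aux_single_inner (d : ℕ) (i j : Fin d) :
    ⟪(EuclideanSpace.single i (1:ℝ)), EuclideanSpace.single j (1:ℝ)⟫ =
      if i = j then (1:ℝ) else 0 := by
  simp [EuclideanSpace.inner_single_left, EuclideanSpace.single_apply, eq_comm]

lemma aux_inner_e (d : ℕ) (b c : ℝ) (i j : Fin d) :
    ⟪b • EuclideanSpace.single i (1:ℝ) + c • ∑ k : Fin d, EuclideanSpace.single k (1:ℝ),
     b • EuclideanSpace.single j (1:ℝ) + c • ∑ k : Fin d, EuclideanSpace.single k (1:ℝ)⟫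
    = b*b*(if i = j then 1 else 0) + b*c + c*b + c*c*d := by
  set u : EuclideanSpace ℝ (Fin d) := ∑ k : Fin d, EuclideanSpace.single k (1:ℝ) with hudef
  have hu : ∀ i : Fin d, ⟪(EuclideanSpace.single i (1:ℝ)), u⟫ = 1 := by
    intro i
    rw [hudef, inner_sum]
    simp [aux_single_inner]
  have hu' : ∀ j : Fin d, ⟪u, EuclideanSpace.single j (1:ℝ)⟫ = 1 := by
    intro j
    rw [hudef, sum_inner]
    simp [aux_single_inner]
  have huu : ⟪u, u⟫ = (d:ℝ) := by
    rw [hudef, sum_inner]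
    rw [← hudef]
    simp [hu]
  rw [inner_add_left, inner_add_right, inner_add_right, real_inner_smul_left,
    real_inner_smul_left, real_inner_smul_left, real_inner_smul_left,
    real_inner_smul_right, real_inner_smul_right, real_inner_smul_right, real_inner_smul_right,
    aux_single_inner, hu, hu', huu]
  ring

theorem stmt_5 (d : ℕ) (hd : 2 ≤ d) (p : ℝ) (hp1 : 1/2 ≤ p) (hp2 : p < 1) :
    let a : ℝ := ((d : ℝ) ^ (2*p - 1) - 1) / ((d : ℝ) - 1)
    (0 ≤ a ∧ a < 1) ∧
    (∃ e : Fin d → EuclideanSpace ℝ (Fin d),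
      (∀ i, ‖e i‖ = 1) ∧ (∀ i j, i ≠ j → ⟪e i, e j⟫ = a)) ∧
    (∀ e : Fin d → EuclideanSpace ℝ (Fin d),
      (∀ i, ‖e i‖ = 1) → (∀ i j, i ≠ j → ⟪e i, e j⟫ = a) →
      ‖∑ i, e i‖ = (d : ℝ) ^ p) := by
  intro a
  have hd2 : (2:ℝ) ≤ (d:ℝ) := by exact_mod_cast hd
  have hd1 : (1:ℝ) < (d:ℝ) := by linarith
  have hd0 : (0:ℝ) < (d:ℝ) := by linarith
  have hdm : (0:ℝ) < (d:ℝ) - 1 := by linarith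
  have hdne : (d:ℝ) ≠ 0 := ne_of_gt hd0
  have hx1 : (1:ℝ) ≤ (d:ℝ) ^ (2*p - 1) :=
    Real.one_le_rpow hd1.le (by linarith)
  have hxd : (d:ℝ) ^ (2*p - 1) < (d:ℝ) := by
    calc (d:ℝ) ^ (2*p - 1) < (d:ℝ) ^ (1:ℝ) :=
          Real.rpow_lt_rpow_of_exponent_lt hd1 (by linarith)
      _ = (d:ℝ) := Real.rpow_one _
  have ha0 : 0 ≤ a := div_nonneg (by linarith) hdm.le
  have ha1 : a < 1 := (div_lt_one hdm).2 (by linarith)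
  have hkey : ((d:ℝ) - 1) * a = (d:ℝ) ^ (2*p - 1) - 1 := by
    rw [mul_div_cancel₀ _ (ne_of_gt hdm)]
  refine ⟨⟨ha0, ha1⟩, ?_, ?_⟩
  · -- existence
    set b : ℝ := Real.sqrt (1 - a) with hbdef
    set s : ℝ := Real.sqrt (1 + ((d:ℝ) - 1) * a) with hsdef
    set c : ℝ := (s - b) / (d:ℝ) with hcdef
    have hb2 : b ^ 2 = 1 - a := Real.sq_sqrt (by linarith)
    have hs2 : s ^ 2 = 1 + ((d:ℝ) - 1) * a := Real.sq_sqrt (by nlinarith)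
    have key : b*b*(1:ℝ) + b*c + c*b + c*c*(d:ℝ) = 1 := by
      rw [hcdef]
      field_simp
      linear_combination ((d:ℝ) - 1) * hb2 + hs2
    refine ⟨fun i => b • EuclideanSpace.single i (1:ℝ) +
        c • ∑ k : Fin d, EuclideanSpace.single k (1:ℝ), ?_, ?_⟩
    · intro i
      set v : EuclideanSpace ℝ (Fin d) := b • EuclideanSpace.single i (1:ℝ) +
          c • ∑ k : Fin d, EuclideanSpace.single k (1:ℝ) with hvdef
      have h1 : ⟪v, v⟫ = 1 := by
        rw [hvdef, aux_inner_e]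
        simpa using key
      have h3 : ‖v‖ ^ 2 = 1 := by
        rw [← real_inner_self_eq_norm_sq, h1]
      calc ‖v‖ = Real.sqrt (‖v‖ ^ 2) := (Real.sqrt_sq (norm_nonneg _)).symm
        _ = 1 := by rw [h3, Real.sqrt_one]
    · intro i j hij
      rw [aux_inner_e, if_neg hij]
      linear_combination key - hb2
  · -- norm of sum
    intro e he1 he2
    have hdiag : ∀ i : Fin d, ⟪e i, e i⟫ = 1 := by
      intro i
      rw [real_inner_self_eq_norm_sq, he1 i, one_pow]
    have hrow : ∀ i : Fin d, ∑ j : Fin d, ⟪e i, e j⟫ = 1 + ((d:ℝ) - 1) * a := by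
      intro i
      rw [← Finset.add_sum_erase Finset.univ _ (Finset.mem_univ i), hdiag i]
      congr 1
      rw [Finset.sum_congr rfl (fun j hj => he2 i j (fun h => (Finset.mem_erase.1 hj).1 h.symm)),
        Finset.sum_const, Finset.card_erase_of_mem (Finset.mem_univ i), Finset.card_univ,
        Fintype.card_fin, nsmul_eq_mul]
      have hc : ((d - 1 : ℕ) : ℝ) = (d:ℝ) - 1 := by
        have h1 : (1:ℕ) ≤ d := by omega
        push_cast [Nat.cast_sub h1]
        ring
      rw [hc]
    have htot : ⟪∑ i, e i, ∑ i, e i⟫ = (d:ℝ) ^ (2*p) := by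
      rw [sum_inner]
      have hr : ∀ i : Fin d, ⟪e i, ∑ j, e j⟫ = 1 + ((d:ℝ) - 1) * a := by
        intro i; rw [inner_sum]; exact hrow i
      rw [Finset.sum_congr rfl (fun i _ => hr i), Finset.sum_const, Finset.card_univ,
        Fintype.card_fin, nsmul_eq_mul]
      have h1 : (d:ℝ) * (1 + ((d:ℝ) - 1) * a) = (d:ℝ)^(1:ℝ) * (d:ℝ)^(2*p-1) := by
        rw [hkey, Real.rpow_one]; ring
      rw [h1, ← Real.rpow_add hd0]
      norm_num
    have hn : ‖∑ i, e i‖ ^ 2 = ((d:ℝ) ^ p) ^ 2 := by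
      rw [← real_inner_self_eq_norm_sq, htot]
      rw [← Real.rpow_natCast ((d:ℝ)^p) 2, ← Real.rpow_mul hd0.le]
      norm_num
      ring_nf
    calc ‖∑ i, e i‖ = Real.sqrt (‖∑ i, e i‖ ^ 2) := (Real.sqrt_sq (norm_nonneg _)).symm
      _ = Real.sqrt (((d:ℝ) ^ p) ^ 2) := by rw [hn]
      _ = (d:ℝ) ^ p := Real.sqrt_sq (Real.rpow_nonneg hd0.le p)
end

section
/- (Karamata's inequality) Let f : I → ℝ be convex on an interval I, and let x_1 ≥ ⋯ ≥ x_n and y_1 ≥ ⋯ ≥ y_n be points of I such that x_1 + ⋯ + x_i ≥ y_1 + ⋯ + y_i for all i < n and x_1 + ⋯ + x_n = y_1 + ⋯ + y_n. Then f(x_1) + ⋯ + f(x_n) ≥ f(y_1) + ⋯ + f(y_n). Moreover, if f is strictly convex, equality holds if and only if x_i = y_i for all i. -/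
noncomputable def ksl (f : ℝ → ℝ) (a b : ℝ) : ℝ := (f b - f a) / (b - a)

lemma ksl_comm (f : ℝ → ℝ) (a b : ℝ) : ksl f a b = ksl f b a := by
  unfold ksl
  rw [← neg_div_neg_eq]; ring_nf

lemma ksl_mul (f : ℝ → ℝ) {a b : ℝ} (h : a ≠ b) :
    ksl f a b * (b - a) = f b - f a := by
  unfold ksl
  field_simp [sub_ne_zero.2 (Ne.symm h)]

lemma ksl_mono_ord {I : Set ℝ} {f : ℝ → ℝ} (hconv : ConvexOn ℝ I f) {p q p' q' : ℝ}
    (hp : p ∈ I) (hq : q ∈ I) (hp' : p' ∈ I) (hq' : q' ∈ I)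
    (h1 : p < q) (h2 : p' < q') (h3 : p ≤ p') (h4 : q ≤ q') :
    ksl f p q ≤ ksl f p' q' := by
  have hpq' : p < q' := lt_of_le_of_lt h3 h2
  have e1 : ksl f p q ≤ ksl f p q' :=
    hconv.secant_mono hp hq hq' (ne_of_gt h1) (ne_of_gt hpq') h4
  have e2 : ksl f q' p ≤ ksl f q' p' :=
    hconv.secant_mono hq' hp hp' (ne_of_lt hpq') (ne_of_lt h2) h3
  rw [ksl_comm f q' p, ksl_comm f q' p'] at e2
  linarith

lemma ksl_mono {I : Set ℝ} {f : ℝ → ℝ} (hconv : ConvexOn ℝ I f) {a b a' b' : ℝ}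
    (ha : a ∈ I) (hb : b ∈ I) (ha' : a' ∈ I) (hb' : b' ∈ I)
    (hab : a ≠ b) (hab' : a' ≠ b') (h1 : a ≤ a') (h2 : b ≤ b') :
    ksl f a b ≤ ksl f a' b' := by
  rcases lt_or_gt_of_ne hab with h | h <;> rcases lt_or_gt_of_ne hab' with h' | h'
  · exact ksl_mono_ord hconv ha hb ha' hb' h h' h1 h2
  · rw [ksl_comm f a' b']
    exact ksl_mono_ord hconv ha hb hb' ha' h h' (h.trans_le h2).le (h2.trans_lt h').le
  · rw [ksl_comm f a b]
    exact ksl_mono_ord hconv hb ha ha' hb' h h' (h.trans_le h1).le (h1.trans_lt h').le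
  · rw [ksl_comm f a b, ksl_comm f a' b']
    exact ksl_mono_ord hconv hb ha hb' ha' h h' h2 h1

lemma ksl_strict_ord {I : Set ℝ} {f : ℝ → ℝ} (hconv : StrictConvexOn ℝ I f) {p q p' q' : ℝ}
    (hp : p ∈ I) (hq : q ∈ I) (hp' : p' ∈ I) (hq' : q' ∈ I)
    (h1 : p < q) (h2 : p' < q') (h3 : p < p') (h4 : q < q') :
    ksl f p q < ksl f p' q' := by
  have hpq' : p < q' := lt_trans h3 h2
  have e1 : ksl f p q < ksl f p q' :=
    hconv.secant_strict_mono hp hq hq' (ne_of_gt h1) (ne_of_gt hpq') h4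
  have e2 : ksl f q' p < ksl f q' p' :=
    hconv.secant_strict_mono hq' hp hp' (ne_of_lt hpq') (ne_of_lt h2) h3
  rw [ksl_comm f q' p, ksl_comm f q' p'] at e2
  linarith

lemma ksl_strict {I : Set ℝ} {f : ℝ → ℝ} (hconv : StrictConvexOn ℝ I f) {a b a' b' : ℝ}
    (ha : a ∈ I) (hb : b ∈ I) (ha' : a' ∈ I) (hb' : b' ∈ I)
    (hab : a ≠ b) (hab' : a' ≠ b') (h1 : a < a') (h2 : b < b') :
    ksl f a b < ksl f a' b' := by
  rcases lt_or_gt_of_ne hab with h | h <;> rcases lt_or_gt_of_ne hab' with h' | h'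
  · exact ksl_strict_ord hconv ha hb ha' hb' h h' h1 h2
  · rw [ksl_comm f a' b']
    exact ksl_strict_ord hconv ha hb hb' ha' h h' (h.trans_le h2.le) (h2.trans h')
  · rw [ksl_comm f a b]
    exact ksl_strict_ord hconv hb ha ha' hb' h h' (h.trans_le h1.le) (h1.trans h')
  · rw [ksl_comm f a b, ksl_comm f a' b']
    exact ksl_strict_ord hconv hb ha hb' ha' h h' h2 h1


noncomputable def kc (f : ℝ → ℝ) (x y : ℕ → ℝ) : ℕ → ℝ
  | 0 => if x 0 = y 0 then 0 else ksl f (y 0) (x 0)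
  | (i+1) => if x (i+1) = y (i+1) then kc f x y i else ksl f (y (i+1)) (x (i+1))

lemma kc_of_ne (f : ℝ → ℝ) (x y : ℕ → ℝ) {i : ℕ} (h : x i ≠ y i) :
    kc f x y i = ksl f (y i) (x i) := by
  cases i <;> simp [kc, h]

lemma kc_of_eq (f : ℝ → ℝ) (x y : ℕ → ℝ) {i : ℕ} (h : x (i+1) = y (i+1)) :
    kc f x y (i+1) = kc f x y i := by
  simp [kc, h]

lemma kc_spec (f : ℝ → ℝ) (x y : ℕ → ℝ) (i : ℕ) :
    (∀ j ≤ i, x j = y j) ∨ ∃ j ≤ i, x j ≠ y j ∧ kc f x y i = ksl f (y j) (x j) := by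
  induction i with
  | zero =>
    by_cases h : x 0 = y 0
    · refine Or.inl fun j hj => ?_
      have : j = 0 := Nat.le_zero.1 hj
      rw [this]; exact h
    · exact Or.inr ⟨0, le_refl 0, h, kc_of_ne f x y h⟩
  | succ i ih =>
    by_cases h : x (i+1) = y (i+1)
    · rcases ih with h1 | ⟨j, hj, hne, hc⟩
      · refine Or.inl fun j hj => ?_
        rcases Nat.le_succ_iff.1 hj with h2 | h2
        · exact h1 j h2
        · rw [h2]; exact h
      · exact Or.inr ⟨j, hj.trans (Nat.le_succ i), hne, (kc_of_eq f x y h).trans hc⟩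
    · exact Or.inr ⟨i+1, le_refl _, h, kc_of_ne f x y h⟩


lemma k_core {I : Set ℝ} {f : ℝ → ℝ} {n : ℕ} {x y : ℕ → ℝ}
    (hxI : ∀ i < n, x i ∈ I) (hyI : ∀ i < n, y i ∈ I)
    (hxdec : ∀ i j, i ≤ j → j < n → x j ≤ x i)
    (hydec : ∀ i j, i ≤ j → j < n → y j ≤ y i)
    (hmaj : ∀ m < n, ∑ i ∈ Finset.range m, y i ≤ ∑ i ∈ Finset.range m, x i)
    (hsum : ∑ i ∈ Finset.range n, x i = ∑ i ∈ Finset.range n, y i)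
    (hconv : ConvexOn ℝ I f) :
    ((∑ i ∈ Finset.range n, f (x i)) - ∑ i ∈ Finset.range n, f (y i)
      = ∑ i ∈ Finset.range (n-1),
          (kc f x y i - kc f x y (i+1)) * (∑ j ∈ Finset.range (i+1), (x j - y j)))
    ∧ ∀ i ∈ Finset.range (n-1),
        0 ≤ (kc f x y i - kc f x y (i+1)) * (∑ j ∈ Finset.range (i+1), (x j - y j)) := by
  constructor
  · have step1 : (∑ i ∈ Finset.range n, f (x i)) - ∑ i ∈ Finset.range n, f (y i)
        = ∑ i ∈ Finset.range n, kc f x y i * (x i - y i) := by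
      rw [← Finset.sum_sub_distrib]
      refine Finset.sum_congr rfl fun i hi => ?_
      by_cases h : x i = y i
      · simp [h]
      · rw [kc_of_ne f x y h, ksl_mul f (Ne.symm h)]
    have habel := Finset.sum_range_by_parts (kc f x y) (fun i => x i - y i) n
    have hG : ∑ i ∈ Finset.range n, (x i - y i) = 0 := by
      rw [Finset.sum_sub_distrib, hsum, sub_self]
    rw [step1]
    simp only [smul_eq_mul] at habel
    rw [habel, hG, mul_zero, zero_sub, ← Finset.sum_neg_distrib]
    exact Finset.sum_congr rfl fun i _ => by ring
  · intro i hi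
    rw [Finset.mem_range] at hi
    have hi1 : i + 1 < n := by omega
    have hDnn : 0 ≤ ∑ j ∈ Finset.range (i+1), (x j - y j) := by
      rw [Finset.sum_sub_distrib, sub_nonneg]
      exact hmaj (i+1) hi1
    by_cases h : x (i+1) = y (i+1)
    · rw [kc_of_eq f x y h, sub_self, zero_mul]
    · rcases kc_spec f x y i with h1 | ⟨j, hj, hne, hc⟩
      · have : ∑ j ∈ Finset.range (i+1), (x j - y j) = 0 :=
          Finset.sum_eq_zero fun j hj => by
            rw [h1 j (Nat.lt_succ_iff.1 (Finset.mem_range.1 hj)), sub_self]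
        rw [this, mul_zero]
      · have hji : j < n := by omega
        have hle : kc f x y (i+1) ≤ kc f x y i := by
          rw [kc_of_ne f x y h, hc]
          exact ksl_mono hconv (hyI _ hi1) (hxI _ hi1) (hyI _ hji) (hxI _ hji)
            (Ne.symm h) (Ne.symm hne) (hydec j (i+1) (by omega) hi1)
            (hxdec j (i+1) (by omega) hi1)
        exact mul_nonneg (sub_nonneg.2 hle) hDnn


lemma k_le {I : Set ℝ} {f : ℝ → ℝ} {n : ℕ} {x y : ℕ → ℝ}
    (hxI : ∀ i < n, x i ∈ I) (hyI : ∀ i < n, y i ∈ I)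
    (hxdec : ∀ i j, i ≤ j → j < n → x j ≤ x i)
    (hydec : ∀ i j, i ≤ j → j < n → y j ≤ y i)
    (hmaj : ∀ m < n, ∑ i ∈ Finset.range m, y i ≤ ∑ i ∈ Finset.range m, x i)
    (hsum : ∑ i ∈ Finset.range n, x i = ∑ i ∈ Finset.range n, y i)
    (hconv : ConvexOn ℝ I f) :
    ∑ i ∈ Finset.range n, f (y i) ≤ ∑ i ∈ Finset.range n, f (x i) := by
  obtain ⟨h1, h2⟩ := k_core hxI hyI hxdec hydec hmaj hsum hconv
  have := Finset.sum_nonneg h2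
  linarith [h1]

lemma k_const (g : ℕ → ℝ) : ∀ k l : ℕ, k ≤ l → (∀ m, k ≤ m → m < l → g m = g (m+1)) →
    g k = g l := by
  intro k l
  induction l with
  | zero => intro h _; rw [Nat.le_zero.1 h]
  | succ l ihl =>
    intro hkl hstep
    rcases Nat.le_succ_iff.1 hkl with h | h
    · exact (ihl h fun m h1 h2 => hstep m h1 (by omega)).trans (hstep l h (by omega))
    · rw [h]

lemma k_eq {I : Set ℝ} {f : ℝ → ℝ} (hsconv : StrictConvexOn ℝ I f) :
    ∀ (n : ℕ) (x y : ℕ → ℝ),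
    (∀ i < n, x i ∈ I) → (∀ i < n, y i ∈ I) →
    (∀ i j, i ≤ j → j < n → x j ≤ x i) →
    (∀ i j, i ≤ j → j < n → y j ≤ y i) →
    (∀ m < n, ∑ i ∈ Finset.range m, y i ≤ ∑ i ∈ Finset.range m, x i) →
    (∑ i ∈ Finset.range n, x i = ∑ i ∈ Finset.range n, y i) →
    (∑ i ∈ Finset.range n, f (x i) = ∑ i ∈ Finset.range n, f (y i)) →
    ∀ i < n, x i = y i := by
  intro n
  induction n using Nat.strong_induction_on with
  | _ n ih =>
  intro x y hxI hyI hxdec hydec hmaj hsum hfeq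
  by_contra hcon
  push_neg at hcon
  obtain ⟨i0, hi0n, hi0⟩ := hcon
  classical
  have hex : ∃ j, x j ≠ y j := ⟨i0, hi0⟩
  set k := Nat.find hex with hkdef
  have hkne : x k ≠ y k := Nat.find_spec hex
  have hkmin : ∀ j < k, x j = y j := fun j hj => by
    have := Nat.find_min hex hj; tauto
  have hkn : k < n := lt_of_le_of_lt (Nat.find_min' hex hi0) hi0n
  set P : ℕ → Prop := fun j => j < n ∧ x j ≠ y j with hP
  set l := Nat.findGreatest P n with hldef
  have hlspec : P l := Nat.findGreatest_spec (le_of_lt hi0n) ⟨hi0n, hi0⟩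
  have hln : l < n := hlspec.1
  have hlne : x l ≠ y l := hlspec.2
  have hlmax : ∀ j, l < j → j < n → x j = y j := by
    intro j h1 h2
    have := Nat.findGreatest_is_greatest (P := P) h1 (le_of_lt h2)
    simp only [hP, not_and, not_not] at this
    exact this h2
  have hkl : k ≤ l := Nat.find_min' hex hlne
  -- partial sums
  set D : ℕ → ℝ := fun m => ∑ j ∈ Finset.range m, (x j - y j) with hDdef
  have hDn : D n = 0 := by
    simp only [hDdef, Finset.sum_sub_distrib, hsum, sub_self]
  have hDnn : ∀ m ≤ n, 0 ≤ D m := by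
    intro m hm
    rcases eq_or_lt_of_le hm with h | h
    · rw [h, hDn]
    · simp only [hDdef, Finset.sum_sub_distrib, sub_nonneg]
      exact hmaj m h
  have hIco : ∀ a b : ℕ, a ≤ b → ∑ j ∈ Finset.Ico a b, (x j - y j) = D b - D a := by
    intro a b hab
    simp only [hDdef]
    rw [Finset.sum_Ico_eq_sub _ hab]
  have hklt : k < l := by
    rcases lt_or_eq_of_le hkl with h | h
    · exact h
    · exfalso
      have : D n = x k - y k := by
        simp only [hDdef]
        refine Finset.sum_eq_single_of_mem k (Finset.mem_range.2 hkn) fun j hj hne => ?_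
        rcases lt_or_gt_of_ne hne with h2 | h2
        · rw [hkmin j h2, sub_self]
        · rw [hlmax j (h ▸ h2) (Finset.mem_range.1 hj), sub_self]
      rw [hDn] at this
      exact hkne (by linarith)
  have hDk1 : D (k+1) = x k - y k := by
    simp only [hDdef]
    refine Finset.sum_eq_single_of_mem k (Finset.mem_range.2 (by omega)) fun j hj hne => ?_
    have : j < k := by have := Finset.mem_range.1 hj; omega
    rw [hkmin j this, sub_self]
  have hxk : y k < x k := by
    have := hDnn (k+1) (by omega)
    rw [hDk1] at this
    rcases lt_or_eq_of_le (by linarith : y k ≤ x k) with h | h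
    · exact h
    · exact absurd h.symm hkne
  have hDl : D l = y l - x l := by
    have h1 : ∑ j ∈ Finset.Ico l n, (x j - y j) = x l - y l := by
      refine Finset.sum_eq_single_of_mem l (Finset.mem_Ico.2 ⟨le_refl l, hln⟩) fun j hj hne => ?_
      obtain ⟨ha, hb⟩ := Finset.mem_Ico.1 hj
      rw [hlmax j (by omega) hb, sub_self]
    have h2 := hIco l n (le_of_lt hln)
    rw [h1, hDn] at h2
    linarith
  have hxl : x l < y l := by
    have := hDnn l (le_of_lt hln)
    rw [hDl] at this
    rcases lt_or_eq_of_le (by linarith : x l ≤ y l) with h | h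
    · exact h
    · exact absurd h hlne
  -- strict slope inequality between kc l and kc k
  have hckl : kc f x y l < kc f x y k := by
    rw [kc_of_ne f x y hkne, kc_of_ne f x y hlne, ksl_comm f (y l) (x l)]
    exact ksl_strict hsconv (hxI l hln) (hyI l hln) (hyI k hkn) (hxI k hkn)
      (ne_of_lt hxl) (Ne.symm hkne)
      (lt_of_lt_of_le hxl (hydec k l hkl hln))
      (lt_of_le_of_lt (hydec k l hkl hln) hxk)
  -- all Abel terms vanish
  obtain ⟨hid, hnn⟩ := k_core hxI hyI hxdec hydec hmaj hsum hsconv.convexOn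
  have hzero : ∀ i ∈ Finset.range (n-1),
      (kc f x y i - kc f x y (i+1)) * (∑ j ∈ Finset.range (i+1), (x j - y j)) = 0 := by
    rw [← Finset.sum_eq_zero_iff_of_nonneg hnn]
    rw [← hid, hfeq, sub_self]
  -- find a jump
  have hm0 : ∃ m0, k ≤ m0 ∧ m0 < l ∧ kc f x y m0 ≠ kc f x y (m0+1) := by
    by_contra hc
    push_neg at hc
    exact absurd (k_const (kc f x y) k l hkl fun m h1 h2 => hc m h1 h2) (ne_of_gt (by linarith))
  obtain ⟨m0, hm0k, hm0l, hm0ne⟩ := hm0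
  have hterm := hzero m0 (Finset.mem_range.2 (by omega))
  have hDm : D (m0+1) = 0 := by
    rcases mul_eq_zero.1 hterm with h | h
    · exact absurd (sub_eq_zero.1 h) hm0ne
    · exact h
  set m := m0 + 1 with hmdef
  have hmk : k < m := by omega
  have hml : m ≤ l := by omega
  have hmn : m < n := by omega
  have hsum1 : ∑ i ∈ Finset.range m, x i = ∑ i ∈ Finset.range m, y i := by
    have := hDm
    simp only [hDdef, Finset.sum_sub_distrib] at this
    linarith
  -- block 1 inequality
  have hle1 : ∑ i ∈ Finset.range m, f (y i) ≤ ∑ i ∈ Finset.range m, f (x i) :=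
    k_le (fun i hi => hxI i (by omega)) (fun i hi => hyI i (by omega))
      (fun i j h1 h2 => hxdec i j h1 (by omega)) (fun i j h1 h2 => hydec i j h1 (by omega))
      (fun p hp => hmaj p (by omega)) hsum1 hsconv.convexOn
  -- block 2 inequality (shifted sequences)
  set x2 : ℕ → ℝ := fun i => x (m + i) with hx2
  set y2 : ℕ → ℝ := fun i => y (m + i) with hy2
  have hr : ∀ g : ℕ → ℝ, ∀ p ≤ n - m,
      ∑ i ∈ Finset.range p, g (m + i) = ∑ i ∈ Finset.range (m+p), g i - ∑ i ∈ Finset.range m, g i := by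
    intro g p hp
    rw [← Finset.sum_Ico_eq_sub g (by omega : m ≤ m + p), Finset.sum_Ico_eq_sum_range]
    simp
  have hle2 : ∑ i ∈ Finset.range (n - m), f (y2 i) ≤ ∑ i ∈ Finset.range (n - m), f (x2 i) := by
    refine k_le (fun i hi => hxI _ (by omega)) (fun i hi => hyI _ (by omega))
      (fun i j h1 h2 => hxdec (m+i) (m+j) (by omega) (by omega))
      (fun i j h1 h2 => hydec (m+i) (m+j) (by omega) (by omega))
      (fun p hp => ?_) ?_ hsconv.convexOn
    · simp only [hx2, hy2]
      rw [hr x p (by omega), hr y p (by omega)]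
      have := hmaj (m + p) (by omega)
      linarith [hsum1]
    · simp only [hx2, hy2]
      rw [hr x (n-m) (le_refl _), hr y (n-m) (le_refl _)]
      have h3 : m + (n - m) = n := by omega
      rw [h3]
      linarith [hsum, hsum1]
  -- combine to get block-1 equality
  have hsplitx : ∑ i ∈ Finset.range n, f (x i)
      = ∑ i ∈ Finset.range m, f (x i) + ∑ i ∈ Finset.range (n-m), f (x2 i) := by
    simp only [hx2]
    rw [hr (fun i => f (x i)) (n-m) (le_refl _)]
    have h3 : m + (n - m) = n := by omega
    rw [h3]; ring
  have hsplity : ∑ i ∈ Finset.range n, f (y i)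
      = ∑ i ∈ Finset.range m, f (y i) + ∑ i ∈ Finset.range (n-m), f (y2 i) := by
    simp only [hy2]
    rw [hr (fun i => f (y i)) (n-m) (le_refl _)]
    have h3 : m + (n - m) = n := by omega
    rw [h3]; ring
  have hfeq1 : ∑ i ∈ Finset.range m, f (x i) = ∑ i ∈ Finset.range m, f (y i) := by
    rw [hsplitx, hsplity] at hfeq
    linarith
  -- induction on the first block
  have := ih m hmn x y (fun i hi => hxI i (by omega)) (fun i hi => hyI i (by omega))
    (fun i j h1 h2 => hxdec i j h1 (by omega)) (fun i j h1 h2 => hydec i j h1 (by omega))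
    (fun p hp => hmaj p (by omega)) hsum1 hfeq1
  exact hkne (this k hmk)


theorem stmt_11 (I : Set ℝ) (f : ℝ → ℝ) (n : ℕ)
    (x y : ℕ → ℝ)
    (hxI : ∀ i < n, x i ∈ I) (hyI : ∀ i < n, y i ∈ I)
    (hxdec : ∀ i j, i ≤ j → j < n → x j ≤ x i)
    (hydec : ∀ i j, i ≤ j → j < n → y j ≤ y i)
    (hmaj : ∀ m < n, ∑ i ∈ Finset.range m, y i ≤ ∑ i ∈ Finset.range m, x i)
    (hsum : ∑ i ∈ Finset.range n, x i = ∑ i ∈ Finset.range n, y i)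
    (hconv : ConvexOn ℝ I f) :
    (∑ i ∈ Finset.range n, f (y i) ≤ ∑ i ∈ Finset.range n, f (x i)) ∧
    (StrictConvexOn ℝ I f →
      ((∑ i ∈ Finset.range n, f (x i) = ∑ i ∈ Finset.range n, f (y i)) ↔
        ∀ i < n, x i = y i)) := by
  refine ⟨k_le hxI hyI hxdec hydec hmaj hsum hconv, fun hs => ⟨fun h =>
    k_eq hs n x y hxI hyI hxdec hydec hmaj hsum h, fun h => ?_⟩⟩
  exact Finset.sum_congr rfl fun i hi => by rw [h i (Finset.mem_range.1 hi)]
end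

section
/- Let c : ℝ → [0,∞) be even, and let e_1, …, e_k be unit vectors in ℝ^d with associated nonzero real masses m_1, …, m_k summing to 0, such that for all i ≠ j: ⟨e_i, e_j⟩ ≤ (c(m_i+m_j)² − c(m_i)² − c(m_j)²)/(2 c(m_i) c(m_j)) (a 'satisfactory configuration'), where c(m_i) > 0 for all i. Then 0 ≤ Σ_i c(m_i)² + Σ_{i<j} (c(m_i+m_j)² − c(m_i)² − c(m_j)²). -/
open scoped RealInnerProductSpace

lemma sum_split_diag (k : ℕ) (f : Fin k → Fin k → ℝ) :
    ∑ i, ∑ j, f i j = (∑ i, f i i) +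
      ∑ i, ∑ j ∈ Finset.univ.filter (fun j => i < j), (f i j + f j i) := by
  have hswap : ∑ i, ∑ j ∈ Finset.univ.filter (fun j => j < i), f i j
      = ∑ j, ∑ i ∈ Finset.univ.filter (fun i => j < i), f i j :=
    Finset.sum_comm' (by simp)
  have hrow : ∀ i : Fin k, ∑ j, f i j =
      f i i + ∑ j ∈ Finset.univ.filter (fun j => j < i), f i j
        + ∑ j ∈ Finset.univ.filter (fun j => i < j), f i j := by
    intro i
    have h2 : (Finset.univ.filter (fun j : Fin k => ¬ i < j)) =
        insert i (Finset.univ.filter (fun j => j < i)) := by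
      ext x
      simp only [Finset.mem_filter, Finset.mem_univ, true_and, Finset.mem_insert, not_lt]
      constructor
      · intro h; rcases lt_or_eq_of_le h with h | h
        · exact Or.inr h
        · exact Or.inl h
      · rintro (rfl | h) <;> [exact le_rfl; exact le_of_lt h]
    rw [← Finset.sum_filter_add_sum_filter_not Finset.univ (fun j => i < j) (f i), h2,
      Finset.sum_insert (by simp)]
    ring
  calc ∑ i, ∑ j, f i j
      = ∑ i, (f i i + ∑ j ∈ Finset.univ.filter (fun j => j < i), f i j
        + ∑ j ∈ Finset.univ.filter (fun j => i < j), f i j) := by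
        exact Finset.sum_congr rfl fun i _ => hrow i
    _ = (∑ i, f i i) + (∑ i, ∑ j ∈ Finset.univ.filter (fun j => j < i), f i j)
        + ∑ i, ∑ j ∈ Finset.univ.filter (fun j => i < j), f i j := by
        rw [Finset.sum_add_distrib, Finset.sum_add_distrib]
    _ = (∑ i, f i i) +
        ∑ i, ∑ j ∈ Finset.univ.filter (fun j => i < j), (f i j + f j i) := by
        rw [hswap, add_assoc, ← Finset.sum_add_distrib]
        congr 1
        refine Finset.sum_congr rfl fun i _ => ?_
        rw [← Finset.sum_add_distrib]
        exact Finset.sum_congr rfl fun j _ => add_comm _ _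

theorem stmt_13 (d k : ℕ) (c : ℝ → ℝ)
    (heven : ∀ x : ℝ, c (-x) = c x)
    (hnonneg : ∀ x : ℝ, 0 ≤ c x)
    (e : Fin k → EuclideanSpace ℝ (Fin d)) (m : Fin k → ℝ)
    (hnorm : ∀ i, ‖e i‖ = 1)
    (hm0 : ∀ i, m i ≠ 0)
    (hsum : ∑ i, m i = 0)
    (hcpos : ∀ i, 0 < c (m i))
    (hsat : ∀ i j, i ≠ j →
      ⟪e i, e j⟫ ≤ (c (m i + m j) ^ 2 - c (m i) ^ 2 - c (m j) ^ 2)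
        / (2 * c (m i) * c (m j))) :
    0 ≤ (∑ i, c (m i) ^ 2) +
        ∑ i, ∑ j ∈ Finset.univ.filter (fun j => i < j),
          (c (m i + m j) ^ 2 - c (m i) ^ 2 - c (m j) ^ 2) := by
  set f : Fin k → Fin k → ℝ := fun i j => c (m i) * c (m j) * ⟪e i, e j⟫ with hf
  have key : (0:ℝ) ≤ ∑ i, ∑ j, f i j := by
    have h0 : (0:ℝ) ≤ ⟪∑ i, c (m i) • e i, ∑ j, c (m j) • e j⟫ := real_inner_self_nonneg
    calc (0:ℝ) ≤ ⟪∑ i, c (m i) • e i, ∑ j, c (m j) • e j⟫ := h0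
      _ = ∑ i, ∑ j, f i j := by
          rw [sum_inner]
          refine Finset.sum_congr rfl fun i _ => ?_
          rw [inner_sum]
          refine Finset.sum_congr rfl fun j _ => ?_
          rw [real_inner_smul_left, real_inner_smul_right, hf]
          ring
  have hdiag : ∀ i, f i i = c (m i) ^ 2 := by
    intro i
    simp only [hf, real_inner_self_eq_norm_sq, hnorm, one_pow, mul_one]
    ring
  have hoff : ∀ i j : Fin k, i ≠ j →
      f i j + f j i ≤ c (m i + m j) ^ 2 - c (m i) ^ 2 - c (m j) ^ 2 := by
    intro i j hij
    have h1 := hcpos i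
    have h2 := hcpos j
    have hD : 0 < 2 * c (m i) * c (m j) := by positivity
    have h := (le_div_iff₀ hD).mp (hsat i j hij)
    have hsymm : ⟪e j, e i⟫ = ⟪e i, e j⟫ := real_inner_comm _ _
    simp only [hf]
    nlinarith [h]
  calc (0:ℝ) ≤ ∑ i, ∑ j, f i j := key
    _ = (∑ i, f i i) +
        ∑ i, ∑ j ∈ Finset.univ.filter (fun j => i < j), (f i j + f j i) :=
        sum_split_diag k f
    _ ≤ (∑ i, c (m i) ^ 2) +
        ∑ i, ∑ j ∈ Finset.univ.filter (fun j => i < j),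
          (c (m i + m j) ^ 2 - c (m i) ^ 2 - c (m j) ^ 2) := by
        refine add_le_add (le_of_eq (Finset.sum_congr rfl fun i _ => hdiag i)) ?_
        refine Finset.sum_le_sum fun i _ => Finset.sum_le_sum fun j hj => ?_
        exact hoff i j (Finset.mem_filter.mp hj).2.ne
end
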